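/- Let $Y_1 \leq Y_2 \leq \cdots \leq Y_n$ be the ordered edge costs of the stable matching on $K_{n,n}$ with distinct edge costs, and for a vertex $u$ let $Y_1^u \leq \cdots \leq Y_{n-1}^u$ be the ordered edge costs of the stable matching of $K_{n,n}$ with $u$ removed (same edge costs). Then for all $k = 1, \ldots, n-1$: $Y_k \leq Y_k^u \leq Y_{k+1}$. -/

import Mathlib

open Finset

/-- A perfect matching `M` (a bijection between the two sides of `K_{n,n}`) is stable for
the costs `w` if every non-matching edge is more expensive than one of its endpoints'
matching edges. -/
def IsStableBipartite {n : ℕ} (w : Fin n → Fin n → ℝ) (M : Fin n ≃ Fin n) : Prop :=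
  ∀ i j : Fin n, M i ≠ j → w i (M i) < w i j ∨ w (M.symm j) j < w i j

/-- A matching of `K_{n,n}` with left vertex `u` removed (an injection from the remaining
left vertices to the right vertices) is stable if every non-matching edge is more
expensive than the matching edge of one of its endpoints (an unmatched right endpoint
having infinite cost). -/
def IsStableBipartiteRemoved {n : ℕ} (w : Fin n → Fin n → ℝ) (u : Fin n)
    (M' : {i : Fin n // i ≠ u} → Fin n) : Prop :=
  Function.Injective M' ∧
    ∀ (i : {i : Fin n // i ≠ u}) (j : Fin n), M' i ≠ j →
      w i.1 (M' i) < w i.1 j ∨ ∃ i', M' i' = j ∧ w i'.1 j < w i.1 j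

/-- Interlacing of the ordered stable matching costs of `K_{n,n}` and of `K_{n,n}` with a
left vertex `u` removed: `Y k ≤ Y^u k ≤ Y (k+1)`. -/
private lemma mono_count_char {m : ℕ} (Y : Fin m → ℝ) (hmono : Monotone Y) (k : Fin m) (t : ℝ) :
    Y k ≤ t ↔ (k : ℕ) + 1 ≤ (Finset.univ.filter (fun j => Y j ≤ t)).card := by
  classical
  constructor
  · intro h
    calc (k : ℕ) + 1 = (Finset.Iic k).card := (Fin.card_Iic k).symm
      _ ≤ _ := Finset.card_le_card (fun j hj => by
          simp only [Finset.mem_Iic] at hj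
          simp only [Finset.mem_filter, Finset.mem_univ, true_and]
          exact le_trans (hmono hj) h)
  · intro h
    by_contra hlt
    push_neg at hlt
    have hsub : Finset.univ.filter (fun j => Y j ≤ t) ⊆ Finset.Iio k := by
      intro j hj
      simp only [Finset.mem_filter, Finset.mem_univ, true_and] at hj
      simp only [Finset.mem_Iio]
      by_contra hk
      push_neg at hk
      exact absurd (le_trans (hmono hk) hj) (not_le.mpr hlt)
    have hc := Finset.card_le_card hsub
    rw [Fin.card_Iio] at hc
    omega

private lemma card_filter_eq_countP {α : Type*} [Fintype α] (f : α → ℝ) (t : ℝ) :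
    (Finset.univ.filter (fun a => f a ≤ t)).card
      = Multiset.countP (fun x => x ≤ t) (Finset.univ.val.map f) := by
  classical
  rw [Multiset.countP_map, ← Finset.filter_val, ← Finset.card_def]

private lemma ptwise_left {n : ℕ} (w : Fin n → Fin n → ℝ) (M : Fin n ≃ Fin n)
    (hM : IsStableBipartite w M) (u : Fin n) (M' : {i : Fin n // i ≠ u} → Fin n)
    (hM' : IsStableBipartiteRemoved w u M') :
    ∀ i : {i : Fin n // i ≠ u}, w i.1 (M' i) ≤ w i.1 (M i.1) := by
  classical
  by_contra h
  push_neg at h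
  obtain ⟨i0, hi0⟩ := h
  set S : Finset {i : Fin n // i ≠ u} :=
    Finset.univ.filter (fun i => w i.1 (M i.1) < w i.1 (M' i)) with hS
  have hne : S.Nonempty := ⟨i0, by simp [hS, hi0]⟩
  obtain ⟨i, hiS, hmin⟩ := Finset.exists_min_image S (fun i => w i.1 (M i.1)) hne
  simp only [hS, Finset.mem_filter, Finset.mem_univ, true_and] at hiS
  have hne2 : M' i ≠ M i.1 := fun he => by rw [he] at hiS; exact lt_irrefl _ hiS
  rcases hM'.2 i (M i.1) hne2 with h1 | ⟨i1, hi1, h2⟩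
  · exact absurd h1 (not_lt.mpr hiS.le)
  · have hni : i1.1 ≠ i.1 := fun he => by rw [he] at h2; exact lt_irrefl _ h2
    have hMne : M i1.1 ≠ M i.1 := fun he => hni (M.injective he)
    rcases hM i1.1 (M i.1) hMne with h3 | h4
    · have hi1S : i1 ∈ S := by
        simp only [hS, Finset.mem_filter, Finset.mem_univ, true_and]
        rw [hi1]; exact h3
      have hm := hmin i1 hi1S
      exact lt_irrefl _ (lt_of_le_of_lt hm (h3.trans h2))
    · rw [Equiv.symm_apply_apply] at h4
      exact lt_irrefl _ (h4.trans h2)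

private lemma ptwise_right {n : ℕ} (w : Fin n → Fin n → ℝ) (M : Fin n ≃ Fin n)
    (hM : IsStableBipartite w M) (u : Fin n) (M' : {i : Fin n // i ≠ u} → Fin n)
    (hM' : IsStableBipartiteRemoved w u M') :
    ∀ i' : {i : Fin n // i ≠ u}, w (M.symm (M' i')) (M' i') ≤ w i'.1 (M' i') := by
  classical
  by_contra h
  push_neg at h
  obtain ⟨i0, hi0⟩ := h
  set S : Finset {i : Fin n // i ≠ u} :=
    Finset.univ.filter (fun i' => w i'.1 (M' i') < w (M.symm (M' i')) (M' i')) with hS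
  have hne : S.Nonempty := ⟨i0, by simp [hS, hi0]⟩
  obtain ⟨i', hiS, hmin⟩ := Finset.exists_min_image S (fun i' => w i'.1 (M' i')) hne
  simp only [hS, Finset.mem_filter, Finset.mem_univ, true_and] at hiS
  have hne1 : M i'.1 ≠ M' i' := by
    intro he
    have hsy : M.symm (M' i') = i'.1 := by rw [← he, Equiv.symm_apply_apply]
    rw [hsy] at hiS
    exact lt_irrefl _ hiS
  rcases hM i'.1 (M' i') hne1 with h1 | h2
  · rcases hM'.2 i' (M i'.1) (fun he => hne1 he.symm) with h3 | ⟨i1, hi1, h4⟩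
    · exact lt_asymm h1 h3
    · have hi1S : i1 ∈ S := by
        simp only [hS, Finset.mem_filter, Finset.mem_univ, true_and]
        rw [hi1, Equiv.symm_apply_apply]
        exact h4
      have hm := hmin i1 hi1S
      rw [hi1] at hm
      exact lt_irrefl _ (lt_of_le_of_lt hm (h4.trans h1))
  · exact lt_asymm hiS h2
theorem stmt12 {n : ℕ} (w : Fin n → Fin n → ℝ)
    (hdistinct : Function.Injective (fun p : Fin n × Fin n => w p.1 p.2))
    (M : Fin n ≃ Fin n) (hM : IsStableBipartite w M)
    (u : Fin n) (M' : {i : Fin n // i ≠ u} → Fin n)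
    (hM' : IsStableBipartiteRemoved w u M')
    (Y : Fin n → ℝ) (hYmono : Monotone Y)
    (hYperm : (Finset.univ.val.map Y) = Finset.univ.val.map (fun i => w i (M i)))
    (Y' : Fin (n - 1) → ℝ) (hY'mono : Monotone Y')
    (hY'perm : (Finset.univ.val.map Y')
      = (Finset.univ.val (α := {i : Fin n // i ≠ u})).map (fun i => w i.1 (M' i))) :
    ∀ k : Fin (n - 1),
      Y ⟨k.1, by omega⟩ ≤ Y' k ∧ Y' k ≤ Y ⟨k.1 + 1, by omega⟩ := by
  classical
  intro k
  have hk : (k : ℕ) < n - 1 := k.2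
  set d : Fin n → ℝ := fun i => w i (M i) with hd
  set d' : {i : Fin n // i ≠ u} → ℝ := fun i => w i.1 (M' i) with hd'
  have hP2 := ptwise_left w M hM u M' hM'
  have hP1 := ptwise_right w M hM u M' hM'
  -- counting inequality 1 : card of cheap M' edges ≤ card of cheap M edges
  have cnt1 : ∀ t : ℝ, (Finset.univ.filter (fun i' => d' i' ≤ t)).card
      ≤ (Finset.univ.filter (fun i => d i ≤ t)).card := by
    intro t
    apply Finset.card_le_card_of_injOn (fun i' => M.symm (M' i'))
    · intro i' hi'
      simp only [Finset.mem_coe, Finset.mem_filter, Finset.mem_univ, true_and] at hi' ⊢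
      have : d (M.symm (M' i')) = w (M.symm (M' i')) (M' i') := by
        simp [hd, Equiv.apply_symm_apply]
      rw [this]
      exact le_trans (hP1 i') hi'
    · intro a _ b _ hab
      exact hM'.1 (M.symm.injective hab)
  -- counting inequality 2
  have cnt2 : ∀ t : ℝ, (Finset.univ.filter (fun i => d i ≤ t)).card
      ≤ (Finset.univ.filter (fun i' => d' i' ≤ t)).card + 1 := by
    intro t
    have hsub : Finset.univ.filter (fun i => d i ≤ t) ⊆
        insert u ((Finset.univ.filter (fun i' => d' i' ≤ t)).image Subtype.val) := by
      intro i hi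
      simp only [Finset.mem_filter, Finset.mem_univ, true_and] at hi
      by_cases hiu : i = u
      · subst hiu; exact Finset.mem_insert_self i _
      · apply Finset.mem_insert_of_mem
        refine Finset.mem_image.mpr ⟨⟨i, hiu⟩, ?_, rfl⟩
        simp only [Finset.mem_filter, Finset.mem_univ, true_and]
        exact le_trans (hP2 ⟨i, hiu⟩) hi
    calc (Finset.univ.filter (fun i => d i ≤ t)).card
        ≤ (insert u ((Finset.univ.filter (fun i' => d' i' ≤ t)).image Subtype.val)).card :=
          Finset.card_le_card hsub
      _ ≤ ((Finset.univ.filter (fun i' => d' i' ≤ t)).image Subtype.val).card + 1 :=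
          Finset.card_insert_le _ _
      _ ≤ (Finset.univ.filter (fun i' => d' i' ≤ t)).card + 1 :=
          Nat.add_le_add_right Finset.card_image_le 1
  -- characterizations
  have charY : ∀ (j : Fin n) (t : ℝ),
      Y j ≤ t ↔ (j : ℕ) + 1 ≤ (Finset.univ.filter (fun i => d i ≤ t)).card := by
    intro j t
    rw [mono_count_char Y hYmono j t, card_filter_eq_countP Y t, hYperm,
      ← card_filter_eq_countP d t]
  have charY' : ∀ (j : Fin (n - 1)) (t : ℝ),
      Y' j ≤ t ↔ (j : ℕ) + 1 ≤ (Finset.univ.filter (fun i' => d' i' ≤ t)).card := by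
    intro j t
    rw [mono_count_char Y' hY'mono j t, card_filter_eq_countP Y' t, hY'perm,
      ← card_filter_eq_countP d' t]
  constructor
  · rw [charY ⟨k.1, by omega⟩ (Y' k)]
    have h1 := (charY' k (Y' k)).mp le_rfl
    exact le_trans h1 (cnt1 (Y' k))
  · rw [charY' k (Y ⟨k.1 + 1, by omega⟩)]
    have h1 := (charY ⟨k.1 + 1, by omega⟩ (Y ⟨k.1 + 1, by omega⟩)).mp le_rfl
    have h2 := cnt2 (Y ⟨k.1 + 1, by omega⟩)
    simp only at h1
    omega
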